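/- Let N ≥ 1, d ≥ 2 and 0 ≤ M ≤ N be integers. The matrix G_0^{(M)} is positive definite: for every nonzero real vector β indexed by the Hamming-weight-M bit strings of length N, Σ_{x,z} β_x β_z / C(M + d − 1 − x·z, d − 1) > 0. -/

import Mathlib

/-- Hamming weight of a bit string. -/
def wt {N : ℕ} (x : Fin N → Bool) : ℕ := (Finset.univ.filter (fun i => x i = true)).card

/-- Number of positions at which both bit strings are 1. -/
def dotB {N : ℕ} (x z : Fin N → Bool) : ℕ :=
  (Finset.univ.filter (fun i => x i = true ∧ z i = true)).card

/-- The (x,z) entry of the matrix `G_y^{(M)}`: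
`1 / C(M + d − 1 − x·z + |x̄ ∧ z̄ ∧ y|, d − 1)`. -/
noncomputable def gEnt (d M : ℕ) {N : ℕ} (y x z : Fin N → Bool) : ℝ :=
  1 / (Nat.choose (M + d - 1 - dotB x z + wt (fun i => (!x i && !z i && y i))) (d - 1) : ℝ)

/- ### Auxiliary lemmas -/

section Aux

open intervalIntegral MeasureTheory Finset

lemma prod_fact (a b : ℕ) :
    a.factorial * ∏ j ∈ Finset.range (b+1), (a+1+j) = (a+b+1).factorial := by
  induction b with
  | zero => simp [Nat.factorial_succ]; ring
  | succ b ih =>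
      have hf : ((a+b+1)+1).factorial = ((a+b+1)+1) * (a+b+1).factorial :=
        Nat.factorial_succ _
      rw [Finset.prod_range_succ, ← mul_assoc, ih,
        show a + (b+1) + 1 = (a+b+1)+1 from by ring, hf]
      ring

lemma beta_nat (a b : ℕ) :
    ∫ t in (0:ℝ)..1, t ^ a * (1 - t) ^ b
      = (a.factorial * b.factorial : ℝ) / (a + b + 1).factorial := by
  have hre : 0 < Complex.re ((a : ℂ) + 1) := by
    rw [Complex.add_re, Complex.one_re, Complex.natCast_re]; positivity
  have h1 : Complex.betaIntegral (a + 1) (b + 1)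
      = ((a.factorial * b.factorial : ℝ) / (a + b + 1).factorial : ℝ) := by
    rw [Complex.betaIntegral_eval_nat_add_one_right hre b]
    have hp : (∏ j ∈ Finset.range (b+1), ((a:ℂ)+1+j))
        = ((∏ j ∈ Finset.range (b+1), (a+1+j) : ℕ) : ℂ) := by
      push_cast; exact Finset.prod_congr rfl fun j _ => by ring
    have hprodpos : 0 < ∏ j ∈ Finset.range (b+1), (a+1+j) :=
      Finset.prod_pos fun j _ => by omega
    have hkey : ((a+b+1).factorial : ℂ)
        = (a.factorial : ℂ) * ((∏ j ∈ Finset.range (b+1), (a+1+j) : ℕ) : ℂ) := by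
      exact_mod_cast (prod_fact a b).symm
    rw [hp, Complex.ofReal_div]
    push_cast
    rw [hkey]
    have ha : (a.factorial : ℂ) ≠ 0 := Nat.cast_ne_zero.mpr a.factorial_ne_zero
    have hb : ((∏ j ∈ Finset.range (b+1), (a+1+j) : ℕ) : ℂ) ≠ 0 :=
      Nat.cast_ne_zero.mpr hprodpos.ne'
    field_simp
    rw [← hp] at hb
    rw [← hp, mul_div_assoc, div_self hb, mul_one]
  have h2 : Complex.betaIntegral (a + 1) (b + 1)
      = ((∫ t in (0:ℝ)..1, t ^ a * (1 - t) ^ b : ℝ) : ℂ) := by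
    rw [Complex.betaIntegral, ← intervalIntegral.integral_ofReal]
    refine intervalIntegral.integral_congr fun t ht => ?_
    have e1 : ((a:ℂ) + 1 - 1) = ((a : ℕ) : ℂ) := by ring
    have e2 : ((b:ℂ) + 1 - 1) = ((b : ℕ) : ℂ) := by ring
    rw [e1, e2, Complex.cpow_natCast, Complex.cpow_natCast]
    push_cast
    ring
  have := h1.symm.trans h2
  exact_mod_cast (Complex.ofReal_inj.mp this).symm

lemma entry_eq (d M s : ℕ) (hd : 2 ≤ d) (hs : s ≤ M) :
    ((Nat.choose (M + d - 1 - s) (d-1) : ℝ))⁻¹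
      = ((d-1 : ℕ) : ℝ) * ∫ t in (0:ℝ)..1, t^(M-s) * (1-t)^(d-2) := by
  rw [beta_nat (M-s) (d-2)]
  have h1 : M + d - 1 - s = (M - s) + (d - 1) := by omega
  have h2 : (M - s) + (d - 2) + 1 = (M - s) + (d - 1) := by omega
  rw [h1, h2]
  have hnat : (d-1) * ((M-s).factorial * (d-2).factorial)
      * Nat.choose ((M-s)+(d-1)) (d-1) = ((M-s)+(d-1)).factorial := by
    have h3 := Nat.choose_mul_factorial_mul_factorial (Nat.le_add_left (d-1) (M-s))
    have h4 : (M - s) + (d-1) - (d-1) = M - s := by omega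
    have h5 : (d - 1).factorial = (d-1) * (d-2).factorial := by
      rw [show d - 1 = (d-2)+1 from by omega, Nat.factorial_succ]
    rw [h4, h5] at h3
    linarith [h3]
  have hC : (0:ℝ) < (Nat.choose ((M-s)+(d-1)) (d-1) : ℝ) := by
    exact_mod_cast Nat.choose_pos (Nat.le_add_left (d-1) (M-s))
  have hF : (0:ℝ) < (((M-s)+(d-1)).factorial : ℝ) := by
    exact_mod_cast Nat.factorial_pos _
  rw [eq_comm, mul_div_assoc', div_eq_iff hF.ne', inv_mul_eq_div, eq_div_iff hC.ne']
  exact_mod_cast hnat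

/- ### Fourier positivity of the Hamming kernel -/

noncomputable def lam (u : ℝ) : Bool → ℝ := fun s => if s then 1 - u else 1 + u
def ev : Bool → Bool → ℝ := fun s a => if s && a then -1 else 1
def chi {N : ℕ} (S x : Fin N → Bool) : ℝ := ∏ i, ev (S i) (x i)

lemma coord_id (u : ℝ) (a b : Bool) :
    (if (a != b) = true then u else 1) = (1/2) * ∑ s : Bool, lam u s * ev s a * ev s b := by
  cases a <;> cases b <;> simp [lam, ev] <;> ring

lemma pow_wt_eq_prod {N : ℕ} (u : ℝ) (x z : Fin N → Bool) :
    u ^ wt (fun i => x i != z i) = ∏ i, (if (x i != z i) = true then u else 1) := by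
  rw [wt, ← Finset.prod_const, Finset.prod_filter]

lemma kernel_expand {N : ℕ} (u : ℝ) (x z : Fin N → Bool) :
    u ^ wt (fun i => x i != z i)
      = (1/2)^N * ∑ S : Fin N → Bool, (∏ i, lam u (S i)) * chi S x * chi S z := by
  rw [pow_wt_eq_prod u]
  have h : ∀ i : Fin N, (if (x i != z i) = true then u else 1)
      = (1/2 : ℝ) * ∑ s : Bool, lam u s * ev s (x i) * ev s (z i) :=
    fun i => coord_id u (x i) (z i)
  rw [Finset.prod_congr rfl (fun i _ => h i), Finset.prod_mul_distrib,
    Finset.prod_const, Fintype.prod_sum]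
  congr 1
  · simp
  · refine Finset.sum_congr rfl fun S _ => ?_
    rw [chi, chi, ← Finset.prod_mul_distrib, ← Finset.prod_mul_distrib]

lemma orthogonality {N : ℕ} (x y : Fin N → Bool) :
    ∑ S : Fin N → Bool, chi S x * chi S y = if x = y then (2:ℝ)^N else 0 := by
  have h : ∀ S : Fin N → Bool, chi S x * chi S y
      = ∏ i, (ev (S i) (x i) * ev (S i) (y i)) := by
    intro S; rw [chi, chi, ← Finset.prod_mul_distrib]
  simp_rw [h]
  rw [← Fintype.prod_sum (fun (i : Fin N) (s : Bool) => ev s (x i) * ev s (y i))]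
  have hev : ∀ a b : Bool, (∑ s : Bool, ev s a * ev s b) = if a = b then (2:ℝ) else 0 := by
    intro a b; cases a <;> cases b <;> simp [ev] <;> norm_num
  simp_rw [hev]
  by_cases hxy : x = y
  · subst hxy; simp
  · rw [if_neg hxy]
    obtain ⟨i, hi⟩ := Function.ne_iff.mp hxy
    exact Finset.prod_eq_zero (Finset.mem_univ i) (by simp [hi])

lemma lam_pos {u : ℝ} (hu0 : 0 < u) (hu1 : u < 1) (s : Bool) : 0 < lam u s := by
  cases s <;> simp [lam] <;> linarith

lemma key_pos {N : ℕ} (u : ℝ) (hu0 : 0 < u) (hu1 : u < 1)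
    (γ : (Fin N → Bool) → ℝ) (hγ : γ ≠ 0) :
    0 < ∑ x : Fin N → Bool, ∑ z : Fin N → Bool,
        γ x * γ z * u ^ wt (fun i => x i != z i) := by
  have expand : (∑ x : Fin N → Bool, ∑ z : Fin N → Bool,
        γ x * γ z * u ^ wt (fun i => x i != z i))
      = (1/2:ℝ)^N * ∑ S : Fin N → Bool,
          (∏ i, lam u (S i)) * (∑ x : Fin N → Bool, γ x * chi S x)^2 := by
    simp only [kernel_expand u, sq, Finset.sum_mul_sum, Finset.mul_sum, Finset.sum_mul]
    refine Eq.trans (Finset.sum_congr rfl fun x _ => Finset.sum_comm) ?_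
    rw [Finset.sum_comm]
    refine Finset.sum_congr rfl fun S _ => Finset.sum_congr rfl fun x _ =>
      Finset.sum_congr rfl fun z _ => by ring
  rw [expand]
  obtain ⟨x₀, hx₀⟩ := Function.ne_iff.mp hγ
  have hT : ∃ S : Fin N → Bool, (∑ x : Fin N → Bool, γ x * chi S x) ≠ 0 := by
    by_contra h
    push_neg at h
    apply hx₀
    have h2N : ((2:ℝ)^N) ≠ 0 := by positivity
    have hz : (2:ℝ)^N * γ x₀ = 0 := by
      calc (2:ℝ)^N * γ x₀
          = ∑ x : Fin N → Bool, γ x * (if x = x₀ then (2:ℝ)^N else 0) := by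
            simp_rw [mul_ite, mul_zero]
            rw [Finset.sum_ite_eq' Finset.univ x₀ (fun x => γ x * (2:ℝ)^N)]
            simp [mul_comm]
        _ = ∑ x : Fin N → Bool, γ x * ∑ S : Fin N → Bool, chi S x * chi S x₀ := by
            simp_rw [orthogonality]
        _ = ∑ S : Fin N → Bool, (∑ x : Fin N → Bool, γ x * chi S x) * chi S x₀ := by
            simp_rw [Finset.mul_sum, Finset.sum_mul]
            rw [Finset.sum_comm]
            exact Finset.sum_congr rfl fun x _ => Finset.sum_congr rfl fun S _ => by ring
        _ = 0 := by simp [h]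
    exact (mul_eq_zero.mp hz).resolve_left h2N
  obtain ⟨S₀, hS₀⟩ := hT
  have hpos : 0 < ∑ S : Fin N → Bool,
      (∏ i, lam u (S i)) * (∑ x : Fin N → Bool, γ x * chi S x)^2 := by
    refine Finset.sum_pos' (fun S _ => ?_) ⟨S₀, Finset.mem_univ S₀, ?_⟩
    · exact mul_nonneg (Finset.prod_nonneg fun i _ => (lam_pos hu0 hu1 _).le) (sq_nonneg _)
    · exact mul_pos (Finset.prod_pos fun i _ => lam_pos hu0 hu1 _)
        (pow_two_pos_of_ne_zero hS₀)
  positivity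

lemma wt_xor_add {N : ℕ} (x z : Fin N → Bool) :
    wt (fun i => x i != z i) + 2 * dotB x z = wt x + wt z := by
  simp only [wt, dotB, Finset.card_filter, Finset.mul_sum, ← Finset.sum_add_distrib]
  have hpt : ∀ a b : Bool,
      ((if (a != b) = true then 1 else 0) + 2 * if a = true ∧ b = true then 1 else 0)
        = ((if a = true then 1 else 0) + if b = true then 1 else 0 : ℕ) := by decide
  exact Finset.sum_congr rfl fun i _ => hpt (x i) (z i)

lemma dotB_le_wt {N : ℕ} (x z : Fin N → Bool) : dotB x z ≤ wt x :=
  Finset.card_le_card (fun i hi => by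
    simp only [Finset.mem_filter] at *; exact ⟨hi.1, hi.2.1⟩)

end Aux

/- ### Main theorem -/

open intervalIntegral MeasureTheory in
/-- The matrix `G_0^{(M)}` is positive definite. -/
theorem G0_posDef (N d M : ℕ) (hN : 1 ≤ N) (hd : 2 ≤ d) (hM : M ≤ N)
    (β : {x : Fin N → Bool // wt x = M} → ℝ) (hβ : β ≠ 0) :
    0 < ∑ x : {x : Fin N → Bool // wt x = M}, ∑ z : {x : Fin N → Bool // wt x = M},
      β x * β z / (Nat.choose (M + d - 1 - dotB x.1 z.1) (d - 1) : ℝ) := by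
  classical
  set γ : (Fin N → Bool) → ℝ := fun x => if h : wt x = M then β ⟨x, h⟩ else 0 with hγdef
  have hγ : γ ≠ 0 := by
    obtain ⟨v, hv⟩ := Function.ne_iff.mp hβ
    refine Function.ne_iff.mpr ⟨v.1, ?_⟩
    simpa [hγdef, v.2] using hv
  have hsub : ∀ f : (Fin N → Bool) → ℝ,
      (∑ x : Fin N → Bool, γ x * f x) = ∑ x : {x : Fin N → Bool // wt x = M}, β x * f x.1 := by
    intro f
    rw [← Finset.sum_filter_of_ne (p := fun x : Fin N → Bool => wt x = M)
      (f := fun x => γ x * f x)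
      (fun x _ hne => by
        by_contra hw
        exact hne (by simp [hγdef, dif_neg hw]))]
    rw [Finset.sum_subtype (p := fun x : Fin N → Bool => wt x = M)
      (Finset.univ.filter (fun x : Fin N → Bool => wt x = M))
      (by intro x; simp) (fun x => γ x * f x)]
    exact Finset.sum_congr rfl fun a _ => by simp [hγdef, a.2]
  have hdot : ∀ x z : {x : Fin N → Bool // wt x = M}, dotB x.1 z.1 ≤ M := fun x z =>
    le_trans (dotB_le_wt x.1 z.1) (le_of_eq x.2)
  -- the inner polynomial is positive on (0,1)
  have hFpos : ∀ t : ℝ, t ∈ Set.Ioo (0:ℝ) 1 →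
      0 < ∑ x : {x : Fin N → Bool // wt x = M}, ∑ z : {x : Fin N → Bool // wt x = M},
          β x * β z * t ^ (M - dotB x.1 z.1) := by
    intro t ht
    set u := Real.sqrt t with hu
    have hu0 : 0 < u := Real.sqrt_pos.mpr ht.1
    have hu1 : u < 1 := by
      rw [hu, show (1:ℝ) = Real.sqrt 1 by simp]
      exact Real.sqrt_lt_sqrt ht.1.le ht.2
    have hterm : ∀ x z : {x : Fin N → Bool // wt x = M},
        t ^ (M - dotB x.1 z.1) = u ^ wt (fun i => x.1 i != z.1 i) := by
      intro x z
      have h2 : wt (fun i => x.1 i != z.1 i) = 2 * (M - dotB x.1 z.1) := by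
        have h3 := wt_xor_add x.1 z.1
        have hx := x.2; have hz := z.2
        have h4 := hdot x z
        omega
      rw [h2, pow_mul, Real.sq_sqrt ht.1.le]
    calc (0:ℝ) < ∑ x : Fin N → Bool, ∑ z : Fin N → Bool,
          γ x * γ z * u ^ wt (fun i => x i != z i) := key_pos u hu0 hu1 γ hγ
      _ = ∑ x : {x : Fin N → Bool // wt x = M}, ∑ z : {x : Fin N → Bool // wt x = M},
          β x * β z * t ^ (M - dotB x.1 z.1) := by
          have step : ∀ x : Fin N → Bool,
              (∑ z : Fin N → Bool, γ x * γ z * u ^ wt (fun i => x i != z i))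
                = γ x * ∑ z : {x : Fin N → Bool // wt x = M},
                    β z * u ^ wt (fun i => x i != z.1 i) := by
            intro x
            rw [← hsub (fun z => u ^ wt (fun i => x i != z i)), Finset.mul_sum]
            exact Finset.sum_congr rfl fun z _ => by ring
          simp_rw [step]
          rw [hsub (fun x => ∑ z : {x : Fin N → Bool // wt x = M},
            β z * u ^ wt (fun i => x i != z.1 i))]
          refine Finset.sum_congr rfl fun x _ => ?_
          rw [Finset.mul_sum]
          refine Finset.sum_congr rfl fun z _ => ?_
          rw [hterm x z]
          ring
  -- rewrite the sum as an integral
  have hrw : (∑ x : {x : Fin N → Bool // wt x = M}, ∑ z : {x : Fin N → Bool // wt x = M},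
        β x * β z / (Nat.choose (M + d - 1 - dotB x.1 z.1) (d - 1) : ℝ))
      = ((d-1 : ℕ) : ℝ) * ∫ t in (0:ℝ)..1,
          (∑ x : {x : Fin N → Bool // wt x = M}, ∑ z : {x : Fin N → Bool // wt x = M},
            β x * β z * t ^ (M - dotB x.1 z.1)) * (1-t)^(d-2) := by
    have h1 : ∀ x z : {x : Fin N → Bool // wt x = M},
        β x * β z / (Nat.choose (M + d - 1 - dotB x.1 z.1) (d - 1) : ℝ)
        = ((d-1:ℕ):ℝ) * ∫ t in (0:ℝ)..1,
            (β x * β z) * (t ^ (M - dotB x.1 z.1) * (1-t)^(d-2)) := by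
      intro x z
      rw [div_eq_mul_inv, entry_eq d M (dotB x.1 z.1) hd (hdot x z),
        intervalIntegral.integral_const_mul]
      ring
    simp_rw [h1, ← Finset.mul_sum]
    congr 1
    have hswap1 : ∀ x : {x : Fin N → Bool // wt x = M},
        (∑ z : {x : Fin N → Bool // wt x = M}, ∫ t in (0:ℝ)..1,
            (β x * β z) * (t ^ (M - dotB x.1 z.1) * (1-t)^(d-2)))
        = ∫ t in (0:ℝ)..1, ∑ z : {x : Fin N → Bool // wt x = M},
            (β x * β z) * (t ^ (M - dotB x.1 z.1) * (1-t)^(d-2)) :=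
      fun x => (intervalIntegral.integral_finset_sum
        (fun z _ => Continuous.intervalIntegrable (by fun_prop) 0 1)).symm
    simp_rw [hswap1]
    rw [← intervalIntegral.integral_finset_sum
      (fun x _ => Continuous.intervalIntegrable (by fun_prop) 0 1)]
    refine intervalIntegral.integral_congr fun t _ => ?_
    rw [Finset.sum_mul]
    refine Finset.sum_congr rfl fun x _ => ?_
    rw [Finset.sum_mul]
    exact Finset.sum_congr rfl fun z _ => by ring
  rw [hrw]
  have hd1 : (0:ℝ) < ((d-1:ℕ):ℝ) := by
    have h5 : 1 ≤ d - 1 := by omega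
    exact_mod_cast Nat.lt_of_lt_of_le Nat.zero_lt_one h5
  refine mul_pos hd1 (intervalIntegral_pos_of_pos_on ?_ ?_ one_pos)
  · exact Continuous.intervalIntegrable (by fun_prop) 0 1
  · intro t ht
    exact mul_pos (hFpos t ht) (pow_pos (by linarith [ht.2]) _)
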